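/- One-step boundary-avoidance bound: fix T, β, ε > 0 and δ > 0. There exist constants C, c > 0, depending only on (T, β, ε, δ), such that for every 0 ≤ s < t ≤ T and every x ∈ ℝ³ with |x| ≥ ε + δ: ∫_{{y ∈ ℝ³ : |y| ≤ ε}} p_{s,t}^{T,β}(x,y) dy ≤ C · e^{−c/(t−s)}. -/

import Mathlib

open MeasureTheory Real
open scoped Classical

set_option maxHeartbeats 1000000

noncomputable section

abbrev E3 : Type := EuclideanSpace ℝ (Fin 3)

/-- Radial three-dimensional free heat kernel `P_t(r) = (4πt)^{-3/2} exp(-r²/(4t))`. -/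
def heatR (t r : ℝ) : ℝ :=
  (4 * π * t) ^ (-(3 : ℝ) / 2) * Real.exp (-r ^ 2 / (4 * t))

/-- Three-dimensional free heat kernel `P_t(x,y) = (4πt)^{-3/2} exp(-|x-y|²/(4t))`. -/
def heatK (t : ℝ) (x y : E3) : ℝ :=
  (4 * π * t) ^ (-(3 : ℝ) / 2) * Real.exp (-‖x - y‖ ^ 2 / (4 * t))

/-- Three-dimensional attractive point interaction heat kernel `P_t^β(x,y)`. -/
def Pbeta (β t : ℝ) (x y : E3) : ℝ :=
  heatK t x y + 2 * t / (‖x‖ * ‖y‖) * heatR t (‖x‖ + ‖y‖)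
    + 8 * π * β * t / (‖x‖ * ‖y‖) *
        ∫ u in Set.Ioi (0 : ℝ), Real.exp (4 * π * β * u) * heatR t (u + ‖x‖ + ‖y‖)

/-- Mass excess function `Q_t^β(x)`, with `Q_0^β(x) := 0`. -/
def Qbeta (β t : ℝ) (x : E3) : ℝ :=
  if t = 0 then 0
  else
    (4 * π * β * ‖x‖ * Real.sqrt (π * t))⁻¹ *
      ∫ w in Set.Ioi (0 : ℝ),
        (Real.exp (4 * π * β * w) - 1) * Real.exp (-(‖x‖ + w) ^ 2 / (4 * t))

/-- Doob-transformed transition density `p_{s,t}^{T,β}(x,y)` (set to `0` at `y = 0`). -/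
def doobP (T β s t : ℝ) (x y : E3) : ℝ :=
  if y = 0 then 0
  else (1 + Qbeta β (T - t) y) / (1 + Qbeta β (T - s) x) * Pbeta β (t - s) x y

/-- Complementary error function `erfc(z) = (2/√π) ∫_z^∞ e^{-u²} du`. -/
def erfc (z : ℝ) : ℝ := 2 / Real.sqrt π * ∫ u in Set.Ioi z, Real.exp (-u ^ 2)

/-! ### Auxiliary lemmas -/

lemma exp_quad_le {a τ r w : ℝ} (hτ : 0 < τ) (hr : 0 ≤ r) (hw : 0 ≤ w) :
    Real.exp (a*w) * Real.exp (-(w+r)^2/(4*τ))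
      ≤ Real.exp (a^2*τ) * Real.exp (-r^2/(4*τ)) * Real.exp (-(w - 2*a*τ)^2/(4*τ)) := by
  rw [← Real.exp_add, ← Real.exp_add, ← Real.exp_add, Real.exp_le_exp]
  have h1 : (a^2*τ + -r^2/(4*τ) + -(w - 2*a*τ)^2/(4*τ)) - (a*w + -(w+r)^2/(4*τ))
      = r*w/(2*τ) := by field_simp; ring
  have h2 : 0 ≤ r*w/(2*τ) := by positivity
  linarith

lemma gauss_shift_integrable {τ : ℝ} (hτ : 0 < τ) (b : ℝ) :
    Integrable (fun w : ℝ => Real.exp (-(w - b)^2/(4*τ))) := by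
  have h : Integrable (fun w : ℝ => Real.exp (-(4*τ)⁻¹ * w^2)) :=
    integrable_exp_neg_mul_sq (by positivity)
  have h2 := h.comp_sub_right b
  have heq : (fun w : ℝ => Real.exp (-(4*τ)⁻¹ * (w - b)^2))
      = fun w => Real.exp (-(w - b)^2/(4*τ)) := by
    funext w; congr 1; field_simp
  rwa [heq] at h2

lemma gauss_shift_integral {τ : ℝ} (hτ : 0 < τ) (b : ℝ) :
    (∫ w : ℝ, Real.exp (-(w - b)^2/(4*τ))) = 2 * Real.sqrt (π*τ) := by
  have h := integral_sub_right_eq_self (μ := volume)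
    (fun u : ℝ => Real.exp (-u^2/(4*τ))) b
  rw [h]
  have heq : (fun u : ℝ => Real.exp (-u^2/(4*τ))) = fun u => Real.exp (-(4*τ)⁻¹ * u^2) := by
    funext u; congr 1; field_simp
  rw [heq, integral_gaussian]
  rw [div_inv_eq_mul]
  have h3 : π * (4*τ) = 4 * (π*τ) := by ring
  rw [h3, show (4:ℝ) * (π*τ) = 2^2 * (π*τ) by norm_num, Real.sqrt_mul (by positivity),
    Real.sqrt_sq (by norm_num : (0:ℝ) ≤ 2)]

lemma tail_integrableOn {a r τ : ℝ} (hτ : 0 < τ) (hr : 0 ≤ r) :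
    IntegrableOn (fun w => Real.exp (a*w) * Real.exp (-(w+r)^2/(4*τ))) (Set.Ioi (0:ℝ)) := by
  apply Integrable.mono'
    (((gauss_shift_integrable hτ (2*a*τ)).const_mul
      (Real.exp (a^2*τ) * Real.exp (-r^2/(4*τ)))).integrableOn)
  · exact ((Real.continuous_exp.comp (continuous_const.mul continuous_id)).mul
      (Real.continuous_exp.comp (by continuity))).aestronglyMeasurable.restrict
  · rw [ae_restrict_iff' measurableSet_Ioi]
    apply ae_of_all
    intro w hw
    rw [Real.norm_of_nonneg (by positivity)]
    exact exp_quad_le hτ hr (le_of_lt hw)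

lemma tail_le {a r τ : ℝ} (hτ : 0 < τ) (hr : 0 ≤ r) :
    (∫ w in Set.Ioi (0:ℝ), Real.exp (a*w) * Real.exp (-(w+r)^2/(4*τ)))
      ≤ Real.exp (a^2*τ) * Real.exp (-r^2/(4*τ)) * (2 * Real.sqrt (π*τ)) := by
  have hg : Integrable (fun w : ℝ =>
      Real.exp (a^2*τ) * Real.exp (-r^2/(4*τ)) * Real.exp (-(w-2*a*τ)^2/(4*τ))) := by
    simpa [mul_assoc] using
      (gauss_shift_integrable hτ (2*a*τ)).const_mul (Real.exp (a^2*τ) * Real.exp (-r^2/(4*τ)))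
  calc (∫ w in Set.Ioi (0:ℝ), Real.exp (a*w) * Real.exp (-(w+r)^2/(4*τ)))
      ≤ ∫ w in Set.Ioi (0:ℝ),
          Real.exp (a^2*τ) * Real.exp (-r^2/(4*τ)) * Real.exp (-(w-2*a*τ)^2/(4*τ)) := by
        apply integral_mono_of_nonneg
        · exact ae_of_all _ fun w => by positivity
        · exact hg.integrableOn
        · filter_upwards [ae_restrict_mem measurableSet_Ioi] with w hw
          exact exp_quad_le hτ hr (le_of_lt hw)
    _ ≤ ∫ w : ℝ, Real.exp (a^2*τ) * Real.exp (-r^2/(4*τ)) * Real.exp (-(w-2*a*τ)^2/(4*τ)) :=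
        setIntegral_le_integral hg (ae_of_all _ fun w => by positivity)
    _ = Real.exp (a^2*τ) * Real.exp (-r^2/(4*τ)) * (2 * Real.sqrt (π*τ)) := by
        rw [integral_const_mul, gauss_shift_integral hτ]

lemma Qbeta_nonneg {β : ℝ} (hβ : 0 < β) (τ : ℝ) (x : E3) : 0 ≤ Qbeta β τ x := by
  have hπ := Real.pi_pos
  unfold Qbeta
  split
  · exact le_refl 0
  · apply mul_nonneg
    · apply inv_nonneg.2
      have := Real.sqrt_nonneg (π * τ)
      positivity
    · apply setIntegral_nonneg measurableSet_Ioi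
      intro w hw
      have hw' : (0:ℝ) < w := hw
      apply mul_nonneg
      · have h0 : (0:ℝ) ≤ 4*π*β*w := by positivity
        linarith [Real.one_le_exp h0]
      · positivity

lemma Qbeta_le {β T : ℝ} (hβ : 0 < β) (hT : 0 < T) {τ : ℝ} (hτ0 : 0 ≤ τ) (hτT : τ ≤ T)
    {x : E3} (hx : x ≠ 0) :
    Qbeta β τ x ≤ Real.exp ((4*π*β)^2*T) / (2*π*β) * ‖x‖⁻¹ := by
  have hπ := Real.pi_pos
  have hxn : 0 < ‖x‖ := norm_pos_iff.2 hx
  unfold Qbeta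
  split
  · positivity
  · rename_i h0
    have hτ : 0 < τ := lt_of_le_of_ne hτ0 (Ne.symm h0)
    have hs : 0 < Real.sqrt (π*τ) := Real.sqrt_pos.2 (by positivity)
    have hI : (∫ w in Set.Ioi (0:ℝ), (Real.exp (4*π*β*w) - 1) * Real.exp (-(‖x‖ + w)^2/(4*τ)))
        ≤ Real.exp ((4*π*β)^2*T) * (2 * Real.sqrt (π*τ)) := by
      calc (∫ w in Set.Ioi (0:ℝ), (Real.exp (4*π*β*w) - 1) * Real.exp (-(‖x‖ + w)^2/(4*τ)))
          ≤ ∫ w in Set.Ioi (0:ℝ), Real.exp ((4*π*β)*w) * Real.exp (-(w+‖x‖)^2/(4*τ)) := by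
            apply integral_mono_of_nonneg
            · filter_upwards [ae_restrict_mem measurableSet_Ioi] with w hw
              have hw' : (0:ℝ) < w := hw
              have h0' : (0:ℝ) ≤ 4*π*β*w := by positivity
              have h1 := Real.one_le_exp h0'
              have h2 : (0:ℝ) ≤ Real.exp (4*π*β*w) - 1 := by linarith
              positivity
            · exact tail_integrableOn hτ hxn.le
            · filter_upwards [ae_restrict_mem measurableSet_Ioi] with w hw
              have hadd : ‖x‖ + w = w + ‖x‖ := by ring
              rw [hadd]
              apply mul_le_mul_of_nonneg_right _ (Real.exp_nonneg _)
              linarith [Real.exp_pos (4*π*β*w)]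
        _ ≤ Real.exp ((4*π*β)^2*τ) * Real.exp (-‖x‖^2/(4*τ)) * (2 * Real.sqrt (π*τ)) :=
            tail_le hτ hxn.le
        _ ≤ Real.exp ((4*π*β)^2*T) * 1 * (2 * Real.sqrt (π*τ)) := by
            apply mul_le_mul_of_nonneg_right _ (by positivity)
            apply mul_le_mul
            · exact Real.exp_le_exp.2 (by nlinarith)
            · exact Real.exp_le_one_iff.2
                (by rw [neg_div]; exact neg_nonpos.2 (by positivity))
            · positivity
            · positivity
        _ = Real.exp ((4*π*β)^2*T) * (2 * Real.sqrt (π*τ)) := by ring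
    have hpre : (0:ℝ) ≤ (4 * π * β * ‖x‖ * Real.sqrt (π * τ))⁻¹ := by positivity
    calc (4 * π * β * ‖x‖ * Real.sqrt (π * τ))⁻¹ *
          (∫ w in Set.Ioi (0:ℝ), (Real.exp (4*π*β*w) - 1) * Real.exp (-(‖x‖ + w)^2/(4*τ)))
        ≤ (4 * π * β * ‖x‖ * Real.sqrt (π * τ))⁻¹ *
            (Real.exp ((4*π*β)^2*T) * (2 * Real.sqrt (π*τ))) :=
          mul_le_mul_of_nonneg_left hI hpre
      _ = Real.exp ((4*π*β)^2*T) / (2*π*β) * ‖x‖⁻¹ := by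
          field_simp
          ring

lemma Pbeta_nonneg {β τ : ℝ} (hβ : 0 < β) (hτ : 0 < τ) (x y : E3) :
    0 ≤ Pbeta β τ x y := by
  have hπ := Real.pi_pos
  unfold Pbeta heatK heatR
  have h1 : (0:ℝ) ≤ (4 * π * τ) ^ (-(3 : ℝ) / 2) := Real.rpow_nonneg (by positivity) _
  have h2 : (0:ℝ) ≤ ∫ u in Set.Ioi (0 : ℝ), Real.exp (4 * π * β * u) *
      ((4 * π * τ) ^ (-(3 : ℝ) / 2) * Real.exp (-(u + ‖x‖ + ‖y‖) ^ 2 / (4 * τ))) := by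
    apply setIntegral_nonneg measurableSet_Ioi
    intro u _
    positivity
  have h3 : (0:ℝ) ≤ ‖x‖ * ‖y‖ := by positivity
  positivity

lemma Pbeta_le {β T ε δ : ℝ} (hβ : 0 < β) (hT : 0 < T) (hε : 0 < ε) (hδ : 0 < δ)
    {τ : ℝ} (hτ : 0 < τ) (hτT : τ ≤ T) {x y : E3}
    (hx : ε + δ ≤ ‖x‖) (hy : ‖y‖ ≤ ε) (hy0 : y ≠ 0) :
    Pbeta β τ x y ≤
      ((4*π)^(-(3:ℝ)/2) + ((4*π)^(-(3:ℝ)/2) *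
          (2*T + 16*π*β*T*Real.sqrt (π*T)*Real.exp ((4*π*β)^2*T)) / (ε+δ)) * ‖y‖⁻¹)
        * (τ^(-(3:ℝ)/2) * Real.exp (-δ^2/(4*τ))) := by
  have hπ := Real.pi_pos
  have hyn : 0 < ‖y‖ := norm_pos_iff.2 hy0
  have hxn : 0 < ‖x‖ := lt_of_lt_of_le (by linarith) hx
  have hsplit : (4 * π * τ) ^ (-(3 : ℝ) / 2)
      = (4*π) ^ (-(3:ℝ)/2) * τ ^ (-(3:ℝ)/2) := by
    rw [Real.mul_rpow (by positivity) hτ.le]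
  have hA0 : (0:ℝ) ≤ (4*π) ^ (-(3:ℝ)/2) := Real.rpow_nonneg (by positivity) _
  have hτ32 : (0:ℝ) ≤ τ ^ (-(3:ℝ)/2) := Real.rpow_nonneg hτ.le _
  have hδxy : δ ≤ ‖x - y‖ := by
    have := norm_sub_norm_le x y
    linarith
  have hδr : δ ≤ ‖x‖ + ‖y‖ := by linarith
  have h1 : heatK τ x y ≤ (4*π)^(-(3:ℝ)/2) * (τ^(-(3:ℝ)/2) * Real.exp (-δ^2/(4*τ))) := by
    unfold heatK
    rw [hsplit, mul_assoc]
    apply mul_le_mul_of_nonneg_left _ hA0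
    apply mul_le_mul_of_nonneg_left _ hτ32
    apply Real.exp_le_exp.2
    rw [neg_div, neg_div, neg_le_neg_iff]
    exact (div_le_div_iff_of_pos_right (by linarith)).2 (by nlinarith)
  have h2 : 2 * τ / (‖x‖ * ‖y‖) * heatR τ (‖x‖ + ‖y‖)
      ≤ (4*π)^(-(3:ℝ)/2) * (2*T) / (ε+δ) * ‖y‖⁻¹
          * (τ^(-(3:ℝ)/2) * Real.exp (-δ^2/(4*τ))) := by
    unfold heatR
    rw [hsplit]
    calc 2 * τ / (‖x‖ * ‖y‖) *
          ((4*π)^(-(3:ℝ)/2) * τ^(-(3:ℝ)/2) * Real.exp (-(‖x‖ + ‖y‖)^2/(4*τ)))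
        ≤ 2 * T / ((ε+δ) * ‖y‖) *
          ((4*π)^(-(3:ℝ)/2) * τ^(-(3:ℝ)/2) * Real.exp (-δ^2/(4*τ))) := by
          apply mul_le_mul
          · apply div_le_div₀ (by linarith) (by linarith) (by positivity)
            exact mul_le_mul_of_nonneg_right hx hyn.le
          · apply mul_le_mul_of_nonneg_left _ (by positivity)
            apply Real.exp_le_exp.2
            rw [neg_div, neg_div, neg_le_neg_iff]
            exact (div_le_div_iff_of_pos_right (by linarith)).2 (by nlinarith)
          · positivity
          · positivity
      _ = 2 * T / (ε+δ) / ‖y‖ *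
          ((4*π)^(-(3:ℝ)/2) * τ^(-(3:ℝ)/2) * Real.exp (-δ^2/(4*τ))) := by
          rw [div_div]
      _ = (4*π)^(-(3:ℝ)/2) * (2*T) / (ε+δ) * ‖y‖⁻¹
          * (τ^(-(3:ℝ)/2) * Real.exp (-δ^2/(4*τ))) := by
          field_simp
  have hJ : (∫ u in Set.Ioi (0:ℝ), Real.exp (4*π*β*u) * heatR τ (u + ‖x‖ + ‖y‖))
      = (4*π*τ)^(-(3:ℝ)/2) *
        ∫ u in Set.Ioi (0:ℝ), Real.exp ((4*π*β)*u) * Real.exp (-(u + (‖x‖+‖y‖))^2/(4*τ)) := by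
    rw [← MeasureTheory.integral_const_mul]
    apply setIntegral_congr_fun measurableSet_Ioi
    intro u _
    show Real.exp (4*π*β*u) * heatR τ (u + ‖x‖ + ‖y‖)
        = (4*π*τ)^(-(3:ℝ)/2) * (Real.exp ((4*π*β)*u) * Real.exp (-(u + (‖x‖+‖y‖))^2/(4*τ)))
    unfold heatR
    rw [show u + ‖x‖ + ‖y‖ = u + (‖x‖ + ‖y‖) from by ring]
    ring
  have hJle : (∫ u in Set.Ioi (0:ℝ), Real.exp (4*π*β*u) * heatR τ (u + ‖x‖ + ‖y‖))
      ≤ (4*π)^(-(3:ℝ)/2) * τ^(-(3:ℝ)/2) *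
          (Real.exp ((4*π*β)^2*T) * Real.exp (-δ^2/(4*τ)) * (2 * Real.sqrt (π*T))) := by
    rw [hJ, hsplit]
    apply mul_le_mul_of_nonneg_left _ (by positivity)
    calc (∫ u in Set.Ioi (0:ℝ), Real.exp ((4*π*β)*u) * Real.exp (-(u + (‖x‖+‖y‖))^2/(4*τ)))
        ≤ Real.exp ((4*π*β)^2*τ) * Real.exp (-(‖x‖+‖y‖)^2/(4*τ)) * (2 * Real.sqrt (π*τ)) :=
          tail_le hτ (by linarith)
      _ ≤ Real.exp ((4*π*β)^2*T) * Real.exp (-δ^2/(4*τ)) * (2 * Real.sqrt (π*T)) := by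
          apply mul_le_mul
          · apply mul_le_mul
            · exact Real.exp_le_exp.2 (by nlinarith)
            · apply Real.exp_le_exp.2
              rw [neg_div, neg_div, neg_le_neg_iff]
              exact (div_le_div_iff_of_pos_right (by linarith)).2 (by nlinarith)
            · positivity
            · positivity
          · have := Real.sqrt_le_sqrt (show π*τ ≤ π*T by nlinarith)
            linarith
          · positivity
          · positivity
  have hJ0 : (0:ℝ) ≤ ∫ u in Set.Ioi (0:ℝ), Real.exp (4*π*β*u) * heatR τ (u + ‖x‖ + ‖y‖) := by
    apply setIntegral_nonneg measurableSet_Ioi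
    intro u _
    unfold heatR
    have : (0:ℝ) ≤ (4 * π * τ) ^ (-(3 : ℝ) / 2) := Real.rpow_nonneg (by positivity) _
    positivity
  have h3 : 8 * π * β * τ / (‖x‖ * ‖y‖) *
        (∫ u in Set.Ioi (0:ℝ), Real.exp (4*π*β*u) * heatR τ (u + ‖x‖ + ‖y‖))
      ≤ (4*π)^(-(3:ℝ)/2) * (16*π*β*T*Real.sqrt (π*T)*Real.exp ((4*π*β)^2*T)) / (ε+δ) * ‖y‖⁻¹
          * (τ^(-(3:ℝ)/2) * Real.exp (-δ^2/(4*τ))) := by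
    calc 8 * π * β * τ / (‖x‖ * ‖y‖) *
          (∫ u in Set.Ioi (0:ℝ), Real.exp (4*π*β*u) * heatR τ (u + ‖x‖ + ‖y‖))
        ≤ 8 * π * β * T / ((ε+δ) * ‖y‖) *
          ((4*π)^(-(3:ℝ)/2) * τ^(-(3:ℝ)/2) *
            (Real.exp ((4*π*β)^2*T) * Real.exp (-δ^2/(4*τ)) * (2 * Real.sqrt (π*T)))) := by
          apply mul_le_mul
          · apply div_le_div₀ (by positivity)
              (mul_le_mul_of_nonneg_left hτT (by positivity)) (by positivity)
            exact mul_le_mul_of_nonneg_right hx hyn.le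
          · exact hJle
          · exact hJ0
          · positivity
      _ = (4*π)^(-(3:ℝ)/2) * (16*π*β*T*Real.sqrt (π*T)*Real.exp ((4*π*β)^2*T)) / (ε+δ) * ‖y‖⁻¹
          * (τ^(-(3:ℝ)/2) * Real.exp (-δ^2/(4*τ))) := by
          field_simp
          ring
  calc Pbeta β τ x y
      = heatK τ x y + 2 * τ / (‖x‖ * ‖y‖) * heatR τ (‖x‖ + ‖y‖)
        + 8 * π * β * τ / (‖x‖ * ‖y‖) *
          (∫ u in Set.Ioi (0:ℝ), Real.exp (4*π*β*u) * heatR τ (u + ‖x‖ + ‖y‖)) := rfl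
    _ ≤ (4*π)^(-(3:ℝ)/2) * (τ^(-(3:ℝ)/2) * Real.exp (-δ^2/(4*τ)))
        + (4*π)^(-(3:ℝ)/2) * (2*T) / (ε+δ) * ‖y‖⁻¹ * (τ^(-(3:ℝ)/2) * Real.exp (-δ^2/(4*τ)))
        + (4*π)^(-(3:ℝ)/2) * (16*π*β*T*Real.sqrt (π*T)*Real.exp ((4*π*β)^2*T)) / (ε+δ) * ‖y‖⁻¹
          * (τ^(-(3:ℝ)/2) * Real.exp (-δ^2/(4*τ))) :=
        add_le_add (add_le_add h1 h2) h3
    _ = ((4*π)^(-(3:ℝ)/2) + ((4*π)^(-(3:ℝ)/2) *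
          (2*T + 16*π*β*T*Real.sqrt (π*T)*Real.exp ((4*π*β)^2*T)) / (ε+δ)) * ‖y‖⁻¹)
        * (τ^(-(3:ℝ)/2) * Real.exp (-δ^2/(4*τ))) := by
        field_simp
        ring

lemma exp_neg_le {x : ℝ} (hx : 0 < x) : Real.exp (-x) ≤ 4 / x^2 := by
  have h1 : x/2 + 1 ≤ Real.exp (x/2) := by
    have := Real.add_one_le_exp (x/2)
    linarith
  have h2 : x^2/4 ≤ Real.exp x := by
    have he : Real.exp x = Real.exp (x/2) * Real.exp (x/2) := by
      rw [← Real.exp_add]; ring_nf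
    nlinarith [Real.exp_pos (x/2)]
  rw [Real.exp_neg]
  have h4 : (Real.exp x)⁻¹ ≤ (x^2/4)⁻¹ := inv_anti₀ (by positivity) h2
  have h5 : (x^2/4)⁻¹ = 4/x^2 := by field_simp
  linarith

lemma time_bound {T δ τ : ℝ} (hT : 0 < T) (hδ : 0 < δ) (hτ : 0 < τ) (hτT : τ ≤ T) :
    τ^(-(3:ℝ)/2) * Real.exp (-δ^2/(4*τ))
      ≤ (256 * Real.sqrt T / δ^4) * Real.exp (-(δ^2/8)/τ) := by
  have hsplit : Real.exp (-δ^2/(4*τ)) = Real.exp (-δ^2/(8*τ)) * Real.exp (-δ^2/(8*τ)) := by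
    rw [← Real.exp_add]; congr 1; field_simp; ring
  have hkey : τ^(-(3:ℝ)/2) * Real.exp (-δ^2/(8*τ)) ≤ 256 * Real.sqrt T / δ^4 := by
    have hx : 0 < δ^2/(8*τ) := by positivity
    have h1 : Real.exp (-(δ^2/(8*τ))) ≤ 4 / (δ^2/(8*τ))^2 := exp_neg_le hx
    have h2 : 4 / (δ^2/(8*τ))^2 = 256 * τ^2 / δ^4 := by field_simp; ring
    have h3 : Real.exp (-δ^2/(8*τ)) = Real.exp (-(δ^2/(8*τ))) := by rw [neg_div]
    have hτν : (τ:ℝ)^(2:ℕ) = τ^((2:ℕ):ℝ) := (Real.rpow_natCast τ 2).symm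
    have hkey2 : τ^(-(3:ℝ)/2) * τ^(((2:ℕ)):ℝ) = τ^((1:ℝ)/2) := by
      rw [← Real.rpow_add hτ]; norm_num
    have h4 : τ^(-(3:ℝ)/2) * (256 * τ^2 / δ^4) = 256 * τ^((1:ℝ)/2) / δ^4 := by
      calc τ^(-(3:ℝ)/2) * (256 * τ^2 / δ^4)
          = 256 * (τ^(-(3:ℝ)/2) * τ^(2:ℕ)) / δ^4 := by ring
        _ = 256 * τ^((1:ℝ)/2) / δ^4 := by rw [hτν, hkey2]
    calc τ^(-(3:ℝ)/2) * Real.exp (-δ^2/(8*τ))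
        ≤ τ^(-(3:ℝ)/2) * (256 * τ^2 / δ^4) := by
          rw [h3]
          exact mul_le_mul_of_nonneg_left (h1.trans_eq h2) (Real.rpow_nonneg hτ.le _)
      _ = 256 * τ^((1:ℝ)/2) / δ^4 := h4
      _ ≤ 256 * Real.sqrt T / δ^4 := by
          have hle : τ^((1:ℝ)/2) ≤ T^((1:ℝ)/2) :=
            Real.rpow_le_rpow hτ.le hτT (by norm_num)
          have hTs : Real.sqrt T = T^((1:ℝ)/2) := by
            rw [Real.sqrt_eq_rpow]
          rw [hTs]
          gcongr
  calc τ^(-(3:ℝ)/2) * Real.exp (-δ^2/(4*τ))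
      = (τ^(-(3:ℝ)/2) * Real.exp (-δ^2/(8*τ))) * Real.exp (-δ^2/(8*τ)) := by
        rw [hsplit]; ring
    _ ≤ (256 * Real.sqrt T / δ^4) * Real.exp (-δ^2/(8*τ)) :=
        mul_le_mul_of_nonneg_right hkey (Real.exp_nonneg _)
    _ = (256 * Real.sqrt T / δ^4) * Real.exp (-(δ^2/8)/τ) := by
        congr 1; congr 1; field_simp

/-- 1-D profile: `t^{-2/3}` on `(0, ε]`, extended by zero. -/
def prof (ε : ℝ) : ℝ → ℝ :=
  Set.indicator (Set.Ioc 0 ε) (fun t => t ^ (-(2:ℝ)/3))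

/-- symmetrized profile -/
def sprof (ε : ℝ) : ℝ → ℝ := fun t => prof ε t + prof ε (-t)

lemma prof_integrable {ε : ℝ} (hε : 0 < ε) : Integrable (prof ε) := by
  rw [prof, integrable_indicator_iff measurableSet_Ioc]
  have h := (intervalIntegral.intervalIntegrable_rpow'
    (show (-1:ℝ) < -(2:ℝ)/3 by norm_num) (a := 0) (b := ε))
  rwa [intervalIntegrable_iff_integrableOn_Ioc_of_le hε.le] at h

lemma sprof_integrable {ε : ℝ} (hε : 0 < ε) : Integrable (sprof ε) := by
  apply Integrable.add (prof_integrable hε)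
  exact (prof_integrable hε).comp_neg

lemma sprof_nonneg (ε : ℝ) (t : ℝ) : 0 ≤ sprof ε t := by
  have h : ∀ u : ℝ, 0 ≤ prof ε u := by
    intro u
    apply Set.indicator_nonneg
    intro v hv
    exact Real.rpow_nonneg (le_of_lt hv.1) _
  exact add_nonneg (h t) (h (-t))

lemma sprof_eq {ε t : ℝ} (ht0 : t ≠ 0) (ht : |t| ≤ ε) :
    sprof ε t = |t| ^ (-(2:ℝ)/3) := by
  rcases lt_or_gt_of_ne ht0 with h | h
  · have h1 : prof ε t = 0 := by
      apply Set.indicator_of_notMem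
      intro hmem
      exact absurd hmem.1 (by linarith)
    have h2 : prof ε (-t) = (-t) ^ (-(2:ℝ)/3) := by
      apply Set.indicator_of_mem
      constructor
      · linarith
      · rw [abs_of_neg h] at ht; linarith
    rw [sprof, h1, h2, abs_of_neg h, zero_add]
  · have h1 : prof ε t = t ^ (-(2:ℝ)/3) := by
      apply Set.indicator_of_mem
      exact ⟨h, by rwa [abs_of_pos h] at ht⟩
    have h2 : prof ε (-t) = 0 := by
      apply Set.indicator_of_notMem
      intro hmem
      have : (0:ℝ) < -t := hmem.1
      linarith
    rw [sprof, h1, h2, abs_of_pos h, add_zero]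

lemma prod_sprof_integrable {ε : ℝ} (hε : 0 < ε) :
    Integrable (fun y : E3 => ∏ i, sprof ε (y i)) := by
  have hpi : Integrable (fun v : Fin 3 → ℝ => ∏ i, sprof ε (v i)) :=
    Integrable.fintype_prod (fun _ => sprof_integrable hε)
  have hmp := EuclideanSpace.volume_preserving_symm_measurableEquiv_toLp (Fin 3)
  exact (hmp.integrable_comp_emb (MeasurableEquiv.measurableEmbedding _)).2 hpi

lemma abs_coord_le_norm (y : E3) (i : Fin 3) : |y i| ≤ ‖y‖ := by
  have h := EuclideanSpace.norm_eq y
  rw [h]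
  have h1 : |y i| = Real.sqrt (|y i|^2) := by
    rw [Real.sqrt_sq_eq_abs, abs_abs]
  rw [h1]
  apply Real.sqrt_le_sqrt
  have h2 : ‖y i‖^2 ≤ ∑ j, ‖y j‖^2 :=
    Finset.single_le_sum (f := fun j => ‖y j‖^2) (fun j _ => by positivity)
      (Finset.mem_univ i)
  simpa [Real.norm_eq_abs] using h2

lemma amgm_bound {ε : ℝ} (hε : 0 < ε) {y : E3} (hy : ∀ i, y i ≠ 0) (hyε : ‖y‖ ≤ ε) :
    (‖y‖⁻¹)^2 ≤ 3⁻¹ * ∏ i, sprof ε (y i) := by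
  have hcoord : ∀ i, sprof ε (y i) = |y i| ^ (-(2:ℝ)/3) := by
    intro i
    exact sprof_eq (hy i) ((abs_coord_le_norm y i).trans hyε)
  have hyn : 0 < ‖y‖ := by
    have : y ≠ 0 := fun h => hy 0 (by rw [h]; rfl)
    exact norm_pos_iff.2 this
  set a : Fin 3 → ℝ := fun i => (y i)^2 with ha
  have hai : ∀ i, 0 < a i := fun i => by
    have := hy i; positivity
  have hnorm2 : ‖y‖^2 = ∑ i, a i := by
    rw [EuclideanSpace.norm_eq, Real.sq_sqrt (by positivity)]
    simp [ha, Real.norm_eq_abs, sq_abs]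
  have hprod : ∏ i, sprof ε (y i) = (∏ i, a i) ^ (-(1:ℝ)/3) := by
    rw [← Real.finset_prod_rpow _ _ (fun i _ => (hai i).le)]
    apply Finset.prod_congr rfl
    intro i _
    show sprof ε (y i) = ((y i)^2 : ℝ) ^ (-(1:ℝ)/3)
    rw [hcoord i]
    rw [show (y i)^2 = |y i|^2 from (sq_abs _).symm]
    rw [← Real.rpow_natCast |y i| 2, ← Real.rpow_mul (abs_nonneg _)]
    norm_num
  set P := ∏ i, a i with hP
  have hPpos : 0 < P := Finset.prod_pos (fun i _ => hai i)
  set m := P ^ ((1:ℝ)/3) with hm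
  have hmpos : 0 < m := Real.rpow_pos_of_pos hPpos _
  have hm3 : m^3 = P := by
    rw [hm, ← Real.rpow_natCast (P ^ ((1:ℝ)/3)) 3, ← Real.rpow_mul hPpos.le]
    norm_num
  have hsum3 : (∑ i, a i)^3 ≥ 27 * P := by
    rw [hP]
    rw [Fin.sum_univ_three, Fin.prod_univ_three]
    nlinarith [hai 0, hai 1, hai 2, sq_nonneg (a 0 - a 1), sq_nonneg (a 1 - a 2),
      sq_nonneg (a 0 - a 2), sq_nonneg (a 0 + a 1 + a 2)]
  have hs : 3 * m ≤ ∑ i, a i := by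
    have hsnn : 0 ≤ ∑ i, a i := Finset.sum_nonneg (fun i _ => (hai i).le)
    have h27 : (3*m)^3 ≤ (∑ i, a i)^3 := by nlinarith [hm3]
    exact le_of_pow_le_pow_left₀ (by norm_num) hsnn h27
  have hPm : P ^ (-(1:ℝ)/3) = m⁻¹ := by
    rw [hm, ← Real.rpow_neg_one (P ^ ((1:ℝ)/3)), ← Real.rpow_mul hPpos.le]
    norm_num
  rw [hprod, hPm]
  have hinv : (‖y‖^2)⁻¹ ≤ (3*m)⁻¹ := by
    apply inv_anti₀ (by positivity)
    rw [hnorm2]; exact hs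
  calc (‖y‖⁻¹)^2 = (‖y‖^2)⁻¹ := by rw [← inv_pow]
    _ ≤ (3*m)⁻¹ := hinv
    _ = 3⁻¹ * m⁻¹ := by rw [mul_inv]

lemma ae_coords_ne_zero : ∀ᵐ y : E3, ∀ i, y i ≠ 0 := by
  have hnull : ∀ i : Fin 3, (volume {y : E3 | y i = 0}) = 0 := by
    intro i
    set L : E3 →ₗ[ℝ] ℝ :=
      (LinearMap.proj i).comp (WithLp.linearEquiv 2 ℝ (Fin 3 → ℝ)).toLinearMap with hL
    have hset : {y : E3 | y i = 0} = (LinearMap.ker L : Set E3) := by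
      ext y
      simp [hL, LinearMap.mem_ker]
    rw [hset]
    apply Measure.addHaar_submodule
    intro htop
    have hmem : (EuclideanSpace.single i (1:ℝ) : E3) ∈ LinearMap.ker L := by
      rw [htop]; trivial
    have h1 : L (EuclideanSpace.single i (1:ℝ)) = 1 := by
      simp [hL]
    rw [LinearMap.mem_ker] at hmem
    rw [hmem] at h1
    exact one_ne_zero h1.symm
  rw [ae_all_iff]
  intro i
  rw [ae_iff]
  simpa [not_not] using hnull i

/-! ### Main theorem -/

theorem one_step_boundary_avoidance (T β ε δ : ℝ)
    (hT : 0 < T) (hβ : 0 < β) (hε : 0 < ε) (hδ : 0 < δ) :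
    ∃ C > 0, ∃ c > 0, ∀ s t : ℝ, 0 ≤ s → s < t → t ≤ T →
      ∀ x : E3, ε + δ ≤ ‖x‖ →
        (∫ y in {y : E3 | ‖y‖ ≤ ε}, doobP T β s t x y)
          ≤ C * Real.exp (-c / (t - s)) := by
  have hπ := Real.pi_pos
  set A : ℝ := (4*π)^(-(3:ℝ)/2) with hA
  set B : ℝ := (4*π)^(-(3:ℝ)/2) *
      (2*T + 16*π*β*T*Real.sqrt (π*T)*Real.exp ((4*π*β)^2*T)) / (ε+δ) with hB
  set KQ : ℝ := Real.exp ((4*π*β)^2*T) / (2*π*β) with hKQ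
  set K3 : ℝ := 256 * Real.sqrt T / δ^4 with hK3
  have hA0 : 0 ≤ A := Real.rpow_nonneg (by positivity) _
  have hB0 : 0 ≤ B := by
    apply div_nonneg _ (by linarith)
    apply mul_nonneg hA0
    have := Real.sqrt_nonneg (π*T)
    positivity
  have hKQ0 : 0 ≤ KQ := by positivity
  have hK30 : 0 < K3 := by
    have : 0 < Real.sqrt T := Real.sqrt_pos.2 hT
    positivity
  set M1 : ℝ := A + B + KQ*A with hM1
  set M2 : ℝ := B + KQ*A + KQ*B with hM2
  have hM10 : 0 ≤ M1 := by positivity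
  have hM20 : 0 ≤ M2 := by positivity
  set S : Set E3 := {y : E3 | ‖y‖ ≤ ε} with hS
  have hSmeas : MeasurableSet S :=
    (isClosed_le continuous_norm continuous_const).measurableSet
  have hSball : S = Metric.closedBall (0:E3) ε := by
    ext y; simp [hS, Metric.mem_closedBall, dist_zero_right]
  have hSfin : volume S < ⊤ := by
    rw [hSball]; exact measure_closedBall_lt_top
  set F : E3 → ℝ := fun y => M1 + M2 * (3⁻¹ * ∏ i, sprof ε (y i)) with hF
  have hFnn : ∀ y, 0 ≤ F y := by
    intro y
    have : 0 ≤ ∏ i, sprof ε (y i) :=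
      Finset.prod_nonneg (fun i _ => sprof_nonneg ε (y i))
    positivity
  have hFint : IntegrableOn F S := by
    apply Integrable.add
    · exact integrableOn_const hSfin.ne
    · exact (((prod_sprof_integrable hε).const_mul 3⁻¹).const_mul M2).integrableOn
  set J : ℝ := ∫ y in S, F y with hJ
  have hJ0 : 0 ≤ J := setIntegral_nonneg hSmeas (fun y _ => hFnn y)
  refine ⟨K3 * J + 1, by positivity, δ^2/8, by positivity, ?_⟩
  intro s t hs hst htT x hx
  set τ := t - s with hτdef
  have hτ : 0 < τ := by simp [hτdef]; linarith
  have hτT : τ ≤ T := by simp [hτdef]; linarith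
  have hx0 : x ≠ 0 := by
    intro h
    rw [h, norm_zero] at hx
    linarith
  -- pointwise bound a.e. on S
  have hptwise : ∀ᵐ y ∂(volume.restrict S),
      doobP T β s t x y ≤ F y * (K3 * Real.exp (-(δ^2/8)/τ)) := by
    filter_upwards [ae_restrict_of_ae ae_coords_ne_zero, ae_restrict_mem hSmeas]
      with y hy1 hy2
    have hy0 : y ≠ 0 := fun h => hy1 0 (by rw [h]; rfl)
    have hyε : ‖y‖ ≤ ε := hy2
    have hyn : 0 < ‖y‖ := norm_pos_iff.2 hy0
    set u : ℝ := ‖y‖⁻¹ with hu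
    have hu0 : 0 ≤ u := by positivity
    -- Q bounds
    have hQx : 0 ≤ Qbeta β (T - s) x := Qbeta_nonneg hβ _ x
    have hQy0 : 0 ≤ Qbeta β (T - t) y := Qbeta_nonneg hβ _ y
    have hQy : Qbeta β (T - t) y ≤ KQ * u :=
      Qbeta_le hβ hT (by linarith) (by linarith) hy0
    have hPle := Pbeta_le hβ hT hε hδ hτ hτT hx hyε hy0
    have hP0 : 0 ≤ Pbeta β τ x y := Pbeta_nonneg hβ hτ x y
    have hG0 : 0 ≤ τ^(-(3:ℝ)/2) * Real.exp (-δ^2/(4*τ)) := by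
      have := Real.rpow_nonneg hτ.le (-(3:ℝ)/2)
      positivity
    have step1 : doobP T β s t x y
        ≤ (1 + KQ*u) * ((A + B*u) * (τ^(-(3:ℝ)/2) * Real.exp (-δ^2/(4*τ)))) := by
      rw [doobP, if_neg hy0]
      calc (1 + Qbeta β (T - t) y) / (1 + Qbeta β (T - s) x) * Pbeta β (t - s) x y
          ≤ (1 + Qbeta β (T - t) y) * Pbeta β (t - s) x y := by
            apply mul_le_mul_of_nonneg_right _ hP0
            exact div_le_self (by linarith) (by linarith)
        _ ≤ (1 + KQ*u) * ((A + B*u) * (τ^(-(3:ℝ)/2) * Real.exp (-δ^2/(4*τ)))) := by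
            apply mul_le_mul _ hPle hP0 (by positivity)
            linarith
    have step2 : (1 + KQ*u) * (A + B*u) ≤ M1 + M2 * u^2 := by
      have hq : 0 ≤ (B + KQ*A) * (u^2 - u + 1) := by
        apply mul_nonneg (by positivity)
        nlinarith [sq_nonneg (2*u - 1)]
      have hq2 : 0 ≤ KQ*B*(u^2 - u^2) := by simp
      nlinarith [mul_nonneg (mul_nonneg hKQ0 hB0) (sq_nonneg u)]
    have step3 : M1 + M2 * u^2 ≤ F y := by
      rw [hF]
      have := amgm_bound hε hy1 hyε
      have hM2u : M2 * u^2 ≤ M2 * (3⁻¹ * ∏ i, sprof ε (y i)) := by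
        apply mul_le_mul_of_nonneg_left _ hM20
        rw [hu]
        exact this
      simp only []
      linarith
    have step4 : τ^(-(3:ℝ)/2) * Real.exp (-δ^2/(4*τ))
        ≤ K3 * Real.exp (-(δ^2/8)/τ) := time_bound hT hδ hτ hτT
    calc doobP T β s t x y
        ≤ (1 + KQ*u) * ((A + B*u) * (τ^(-(3:ℝ)/2) * Real.exp (-δ^2/(4*τ)))) := step1
      _ = ((1 + KQ*u) * (A + B*u)) * (τ^(-(3:ℝ)/2) * Real.exp (-δ^2/(4*τ))) := by ring
      _ ≤ (M1 + M2 * u^2) * (τ^(-(3:ℝ)/2) * Real.exp (-δ^2/(4*τ))) :=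
          mul_le_mul_of_nonneg_right step2 hG0
      _ ≤ F y * (τ^(-(3:ℝ)/2) * Real.exp (-δ^2/(4*τ))) :=
          mul_le_mul_of_nonneg_right step3 hG0
      _ ≤ F y * (K3 * Real.exp (-(δ^2/8)/τ)) :=
          mul_le_mul_of_nonneg_left step4 (hFnn y)
  -- doobP is nonnegative
  have hdoob0 : ∀ y : E3, 0 ≤ doobP T β s t x y := by
    intro y
    rw [doobP]
    split
    · exact le_refl 0
    · rename_i hy0
      apply mul_nonneg
      · apply div_nonneg
        · linarith [Qbeta_nonneg hβ (T - t) y]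
        · linarith [Qbeta_nonneg hβ (T - s) x]
      · exact Pbeta_nonneg hβ hτ x y
  calc (∫ y in {y : E3 | ‖y‖ ≤ ε}, doobP T β s t x y)
      ≤ ∫ y in S, F y * (K3 * Real.exp (-(δ^2/8)/τ)) := by
        apply integral_mono_of_nonneg (ae_of_all _ hdoob0)
          (hFint.mul_const _) hptwise
    _ = J * (K3 * Real.exp (-(δ^2/8)/τ)) := by
        rw [integral_mul_const]
    _ ≤ (K3 * J + 1) * Real.exp (-(δ^2/8)/τ) := by
        have : 0 < Real.exp (-(δ^2/8)/τ) := Real.exp_pos _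
        nlinarith
    _ = (K3 * J + 1) * Real.exp (-(δ^2/8) / (t - s)) := rfl

end
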